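/- arXiv:2305.01714 — 3 statements merged into one kernel-verified Lean document; each statement's English description precedes it below -/
import Mathlib

section
/- Fix a real constant c > e (Euler's number). There exist a constant C > 0 and a threshold N such that for every integer n ≥ N the following holds. Let V and U be finite sets with |V| ≤ n and |U| = ⌈c·n⌉. Choose, uniformly at random and independently for each v ∈ V, a 3-element subset f(v) of U (uniform over all 3-element subsets of U). Then with probability at least 1 − C/n^5 there exists an injective map g : V → U with g(v) ∈ f(v) for every v ∈ V. -/
open Finset Nat

lemma aux_card_sub3 {U : Type} [Fintype U] [DecidableEq U] (T : Finset U) :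
    (Finset.univ.filter fun s : {s : Finset U // s.card = 3} => s.1 ⊆ T).card
      = T.card.choose 3 := by
  rw [← Finset.card_powersetCard 3 T]
  apply Finset.card_bij (fun s _ => s.1)
  · intro s hs
    simp [Finset.mem_powersetCard, (mem_filter.mp hs).2, s.2]
  · intro a _ b _ h; exact Subtype.ext h
  · intro t ht
    rw [Finset.mem_powersetCard] at ht
    exact ⟨⟨t, ht.2⟩, by simp [ht.1], rfl⟩

lemma aux_count {V U : Type} [Fintype V] [Fintype U] [DecidableEq V] [DecidableEq U]
    (S : Finset V) (T : Finset U) :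
    (Finset.univ.filter fun f : V → {s : Finset U // s.card = 3} =>
        ∀ v ∈ S, (f v).1 ⊆ T).card
      = (T.card.choose 3) ^ S.card
        * ((Fintype.card U).choose 3) ^ (Fintype.card V - S.card) := by
  classical
  have h1 : (Finset.univ.filter fun f : V → {s : Finset U // s.card = 3} =>
        ∀ v ∈ S, (f v).1 ⊆ T)
      = Fintype.piFinset (fun v =>
          if v ∈ S then (Finset.univ.filter fun s : {s : Finset U // s.card = 3} => s.1 ⊆ T)
          else Finset.univ) := by
    ext f
    simp only [mem_filter, mem_univ, true_and, Fintype.mem_piFinset]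
    constructor
    · intro h v
      by_cases hv : v ∈ S <;> simp [hv, h]
    · intro h v hv
      have := h v
      simpa [hv] using this
  rw [h1, Fintype.card_piFinset]
  rw [← Finset.prod_filter_mul_prod_filter_not Finset.univ (· ∈ S)]
  have hS : Finset.univ.filter (· ∈ S) = S := by ext v; simp
  have hS' : (Finset.univ.filter (¬ · ∈ S)).card = Fintype.card V - S.card := by
    rw [Finset.filter_not, hS]
    simp [Finset.card_sdiff_of_subset (Finset.subset_univ S), Finset.card_univ]
  rw [hS]
  have e1 : ∏ v ∈ S, (if v ∈ S then (Finset.univ.filter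
        fun s : {s : Finset U // s.card = 3} => s.1 ⊆ T) else Finset.univ).card
      = (T.card.choose 3) ^ S.card := by
    rw [Finset.prod_congr rfl (fun v hv => by rw [if_pos hv])]
    rw [Finset.prod_const, aux_card_sub3]
  have e2 : ∏ v ∈ Finset.univ.filter (¬ · ∈ S), (if v ∈ S then (Finset.univ.filter
        fun s : {s : Finset U // s.card = 3} => s.1 ⊆ T) else Finset.univ).card
      = ((Fintype.card U).choose 3) ^ (Fintype.card V - S.card) := by
    rw [Finset.prod_congr rfl (fun v hv => by
      rw [if_neg (by simpa using (mem_filter.mp hv).2)])]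
    rw [Finset.prod_const, hS']
    congr 1
    rw [Finset.card_univ, Fintype.card_finset_len]
  rw [e1, e2]


lemma aux_pow_self_le (k : ℕ) : ((k:ℝ))^k ≤ Real.exp 1 ^ k * (k ! : ℝ) := by
  have h := Real.pow_div_factorial_le_exp (x := (k:ℝ)) (Nat.cast_nonneg k) k
  rw [show Real.exp (k:ℝ) = Real.exp 1 ^ k by rw [← Real.exp_nat_mul]; norm_num] at h
  have hf : (0:ℝ) < (k ! : ℝ) := by positivity
  rw [div_le_iff₀ hf] at h; exact h

lemma aux_term (c₁ c₂ nn : ℝ) (m u l : ℕ)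
    (hc1 : 0 < c₁) (hc2 : 1 ≤ c₂)
    (hn0 : 0 < nn) (hmn : (m:ℝ) ≤ nn)
    (hkm : l + 4 ≤ m)
    (hu1 : (u:ℝ) ≤ c₂ * nn) (hu2 : c₁ * nn ≤ (u:ℝ) - 2) :
    (m.choose (l+4) : ℝ) * (u.choose (l+3) : ℝ) * ((l+3).choose 3 : ℝ)^(l+4)
        * (u.choose 3 : ℝ)^(m-(l+4))
      ≤ (Real.exp 1^2 * c₂ / c₁^3)^(l+4) * ((l+4 : ℕ):ℝ)^5 / nn^5
        * (u.choose 3 : ℝ)^m := by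
  obtain ⟨e1, he1def⟩ : ∃ x : ℝ, Real.exp 1 = x := ⟨_, rfl⟩
  rw [he1def]
  have he1 : 1 ≤ e1 := by
    rw [← he1def]; nlinarith [Real.exp_one_gt_d9]
  have he10 : (0:ℝ) < e1 := by linarith
  obtain ⟨K, hKcast⟩ : ∃ x : ℝ, ((l+4 : ℕ):ℝ) = x := ⟨_, rfl⟩
  obtain ⟨J, hJcast⟩ : ∃ x : ℝ, ((l+3 : ℕ):ℝ) = x := ⟨_, rfl⟩
  have hKdef : K = (l:ℝ) + 4 := by rw [← hKcast]; push_cast; ring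
  have hJdef : J = (l:ℝ) + 3 := by rw [← hJcast]; push_cast; ring
  have hK0 : (0:ℝ) < K := by rw [hKdef]; positivity
  have hJ0 : (0:ℝ) < J := by rw [hJdef]; positivity
  have hJK : J ≤ K := by rw [hKdef, hJdef]; linarith
  have hu2' : (0:ℝ) < (u:ℝ) - 2 := lt_of_lt_of_le (by positivity) hu2
  have hu0 : (0:ℝ) < (u:ℝ) := by linarith
  have hu3 : 2 ≤ u := by exact_mod_cast (by linarith : (2:ℝ) ≤ (u:ℝ))
  have hJn : J ≤ nn := by
    have : ((l:ℝ) + 4) ≤ (m:ℝ) := by exact_mod_cast hkm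
    rw [hJdef]; linarith
  -- basic binomial bounds
  have hX : (m.choose (l+4) : ℝ) ≤ nn^(l+4) / ((l+4)! : ℝ) := by
    refine (Nat.choose_le_pow_div (l+4) m).trans ?_
    gcongr
  have hY : (u.choose (l+3) : ℝ) ≤ (c₂*nn)^(l+3) / ((l+3)! : ℝ) := by
    refine (Nat.choose_le_pow_div (l+3) u).trans ?_
    gcongr
  have hZ : ((l+3).choose 3 : ℝ) ≤ J^3 / 6 := by
    have h := Nat.choose_le_pow_div (α := ℝ) 3 (l+3)
    have h6 : ((3:ℕ)! : ℝ) = 6 := by norm_num [Nat.factorial]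
    rw [h6, hJcast] at h
    exact h
  have hW : ((u:ℝ)-2)^3 / 6 ≤ (u.choose 3 : ℝ) := by
    have h2 : u - 2 ≤ u - 1 := by omega
    have h3 : u - 2 ≤ u * 1 := by omega
    have h1 : (u-2)^3 ≤ u.descFactorial 3 :=
      calc (u-2)^3 = ((u-2)*(u-2))*(u-2) := by ring
        _ ≤ ((u-2)*(u-1))*(u*1) := Nat.mul_le_mul (Nat.mul_le_mul_left _ h2) h3
        _ = (u-2)*((u-1)*(u*1)) := by ring
        _ = u.descFactorial 3 := rfl
    have h2' : u.descFactorial 3 = 6 * u.choose 3 := by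
      rw [Nat.descFactorial_eq_factorial_mul_choose]
      norm_num [Nat.factorial]
    rw [h2'] at h1
    have h3' : (((u-2 : ℕ)):ℝ)^3 ≤ 6 * (u.choose 3 : ℝ) := by exact_mod_cast h1
    rw [Nat.cast_sub hu3] at h3'
    push_cast at h3'
    linarith
  have hW0 : (0:ℝ) < (u.choose 3 : ℝ) := lt_of_lt_of_le (by positivity) hW
  have hWc : (c₁*nn)^3/6 ≤ (u.choose 3:ℝ) := by
    refine le_trans ?_ hW
    gcongr
  -- factorial lower bounds
  have hKk : K^(l+4) ≤ e1^(l+4) * ((l+4)! : ℝ) := by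
    have := aux_pow_self_le (l+4); rwa [hKcast, he1def] at this
  have hJj : J^(l+3) ≤ e1^(l+3) * ((l+3)! : ℝ) := by
    have := aux_pow_self_le (l+3); rwa [hJcast, he1def] at this
  rw [hKcast]
  have hsplit : (u.choose 3:ℝ)^m = (u.choose 3:ℝ)^(l+4) * (u.choose 3:ℝ)^(m-(l+4)) := by
    rw [← pow_add]; congr 1; omega
  have hcore : (m.choose (l+4):ℝ) * (u.choose (l+3):ℝ) * ((l+3).choose 3:ℝ)^(l+4)
      ≤ (e1^2*c₂/c₁^3)^(l+4) * K^5/nn^5 * (u.choose 3:ℝ)^(l+4) := by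
    have h1 : nn^(l+4)/((l+4)!:ℝ) ≤ nn^(l+4) * e1^(l+4) / K^(l+4) := by
      rw [div_le_div_iff₀ (by positivity) (by positivity)]
      calc nn^(l+4) * K^(l+4) ≤ nn^(l+4) * (e1^(l+4) * ((l+4)!:ℝ)) := by gcongr
        _ = nn ^ (l + 4) * e1 ^ (l + 4) * ((l+4)! : ℝ) := by ring
    have h2 : (c₂*nn)^(l+3)/((l+3)!:ℝ) ≤ (c₂*nn)^(l+3) * e1^(l+3) / J^(l+3) := by
      rw [div_le_div_iff₀ (by positivity) (by positivity)]
      calc (c₂*nn)^(l+3) * J^(l+3) ≤ (c₂*nn)^(l+3) * (e1^(l+3) * ((l+3)!:ℝ)) := by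
            gcongr
        _ = (c₂*nn)^(l+3) * e1^(l+3) * ((l+3)! : ℝ) := by ring
    have step1 : (m.choose (l+4):ℝ) * (u.choose (l+3):ℝ) * ((l+3).choose 3:ℝ)^(l+4)
        ≤ (nn^(l+4)/((l+4)!:ℝ)) * ((c₂*nn)^(l+3)/((l+3)!:ℝ)) * (J^3/6)^(l+4) := by
      gcongr
    have step2 : (nn^(l+4)/((l+4)!:ℝ)) * ((c₂*nn)^(l+3)/((l+3)!:ℝ)) * (J^3/6)^(l+4)
        ≤ (nn^(l+4) * e1^(l+4) * ((c₂*nn)^(l+3) * e1^(l+3)) * (J^3)^(l+4))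
            / (K^(l+4) * J^(l+3) * 6^(l+4)) := by
      calc (nn^(l+4)/((l+4)!:ℝ)) * ((c₂*nn)^(l+3)/((l+3)!:ℝ)) * (J^3/6)^(l+4)
          ≤ (nn^(l+4) * e1^(l+4) / K^(l+4)) * ((c₂*nn)^(l+3) * e1^(l+3) / J^(l+3)) * (J^3/6)^(l+4) := by
            gcongr
        _ = (nn^(l+4) * e1^(l+4) * ((c₂*nn)^(l+3) * e1^(l+3)) * (J^3)^(l+4))
            / (K^(l+4) * J^(l+3) * 6^(l+4)) := by
            rw [div_pow, _root_.div_mul_div_comm, _root_.div_mul_div_comm]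
    have step3 : (nn^(l+4) * e1^(l+4) * ((c₂*nn)^(l+3) * e1^(l+3)) * (J^3)^(l+4))
            / (K^(l+4) * J^(l+3) * 6^(l+4))
        ≤ ((e1^2*c₂)^(l+4) * K^5 * ((c₁*nn)^3)^(l+4)) / ((c₁^3)^(l+4) * nn^5 * 6^(l+4)) := by
      rw [div_le_div_iff₀ (by positivity) (by positivity)]
      calc nn ^ (l + 4) * e1 ^ (l + 4) * ((c₂ * nn) ^ (l + 3) * e1 ^ (l + 3)) * (J ^ 3) ^ (l + 4)
            * ((c₁ ^ 3) ^ (l + 4) * nn ^ 5 * 6 ^ (l + 4))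
          = (nn^(2*l+12) * c₂^(l+3) * c₁^(3*l+12) * 6^(l+4) * J^(l+3))
              * (J^(l+9) * J^l) * e1^(2*l+7) * 1 := by ring
        _ ≤ (nn^(2*l+12) * c₂^(l+3) * c₁^(3*l+12) * 6^(l+4) * J^(l+3))
              * (K^(l+9) * nn^l) * e1^(2*l+8) * c₂ := by
            gcongr
            · norm_num
        _ = (e1 ^ 2 * c₂) ^ (l + 4) * K ^ 5 * ((c₁ * nn) ^ 3) ^ (l + 4)
              * (K ^ (l + 4) * J ^ (l + 3) * 6 ^ (l + 4)) := by ring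
    have step3' : ((e1^2*c₂)^(l+4) * K^5 * ((c₁*nn)^3)^(l+4)) / ((c₁^3)^(l+4) * nn^5 * 6^(l+4))
        = (e1^2*c₂/c₁^3)^(l+4) * K^5/nn^5 * ((c₁*nn)^3/6)^(l+4) := by
      rw [div_pow, div_pow]
      field_simp
    have step4 : (e1^2*c₂/c₁^3)^(l+4) * K^5/nn^5 * ((c₁*nn)^3/6)^(l+4)
        ≤ (e1^2*c₂/c₁^3)^(l+4) * K^5/nn^5 * (u.choose 3:ℝ)^(l+4) := by
      gcongr
    exact ((step1.trans step2).trans (step3.trans_eq step3')).trans step4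
  calc (m.choose (l+4):ℝ) * (u.choose (l+3):ℝ) * ((l+3).choose 3:ℝ)^(l+4) * (u.choose 3:ℝ)^(m-(l+4))
      ≤ ((e1^2*c₂/c₁^3)^(l+4) * K^5/nn^5 * (u.choose 3:ℝ)^(l+4)) * (u.choose 3:ℝ)^(m-(l+4)) := by
        gcongr
    _ = (e1^2*c₂/c₁^3)^(l+4) * K^5/nn^5 * (u.choose 3:ℝ)^m := by
        rw [hsplit]; ring


/-- One-sided random 3-out perfect matching lemma: for a fixed `c > e`, there are
`C > 0` and a threshold `N` such that for all `n ≥ N`, if `|V| ≤ n` and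
`|U| = ⌈c·n⌉`, and each `v ∈ V` picks a uniformly random 3-element subset
`f v ⊆ U` independently, then with probability at least `1 - C/n^5` there is an
injective `g : V → U` with `g v ∈ f v` for all `v`. The probability is expressed
as the fraction of functions `f` admitting such a `g`. -/
theorem stmt_0 (c : ℝ) (hc : Real.exp 1 < c) :
    ∃ C : ℝ, 0 < C ∧ ∃ N : ℕ, ∀ n : ℕ, N ≤ n →
      ∀ (V U : Type) [Fintype V] [Fintype U] [DecidableEq V] [DecidableEq U],
        Fintype.card V ≤ n → Fintype.card U = ⌈c * n⌉₊ →
        1 - C / (n : ℝ) ^ 5 ≤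
          (Nat.card {f : V → {s : Finset U // s.card = 3} //
              ∃ g : V → U, Function.Injective g ∧ ∀ v, g v ∈ (f v).1} : ℝ) /
            (Fintype.card (V → {s : Finset U // s.card = 3}) : ℝ) := by
  classical
  have he1 : (1:ℝ) < Real.exp 1 := by nlinarith [Real.exp_one_gt_d9]
  have he10 : (0:ℝ) < Real.exp 1 := by linarith
  have hc1 : (1:ℝ) < c := he1.trans hc
  have hc0 : (0:ℝ) < c := by linarith
  obtain ⟨e1, he1def⟩ : ∃ x : ℝ, Real.exp 1 = x := ⟨_, rfl⟩
  rw [he1def] at he1 he10 hc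
  obtain ⟨ε, hεdef⟩ : ∃ x : ℝ, (c^3 - e1^2 * c) / (2*(4*c^2 + e1^2)) = x := ⟨_, rfl⟩
  have hden : (0:ℝ) < 2*(4*c^2 + e1^2) := by positivity
  have hkey : ε * (8*c^2 + 2*e1^2) = c^3 - e1^2*c := by
    rw [← hεdef, div_mul_eq_mul_div, div_eq_iff hden.ne']; ring
  have hnum : (0:ℝ) < c^3 - e1^2*c := by
    nlinarith [mul_pos hc0 (mul_pos (sub_pos.mpr hc) (by positivity : (0:ℝ) < c + e1))]
  have hε : 0 < ε := by
    rw [← hεdef]; exact div_pos hnum hden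
  have hden2 : (0:ℝ) < 8*c^2 + 2*e1^2 := by positivity
  have hεlt : ε < c := by
    nlinarith [hkey, hden2, mul_pos hc0 (mul_pos hc0 hc0), mul_pos hc0 (mul_pos he10 he10)]
  have hc₁0 : 0 < c - ε := by linarith
  have hcube : ε^3 ≤ c^2*ε := by
    nlinarith [mul_pos (mul_pos (sub_pos.mpr hεlt) (show (0:ℝ) < c + ε by positivity)) hε]
  have hAlt : e1^2*(c+ε) < (c-ε)^3 := by
    nlinarith [hkey, hcube, mul_pos hε (show (0:ℝ) < 4*c^2+e1^2 by positivity),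
      mul_pos (mul_pos hc0 hε) hε, mul_pos hε (mul_pos he10 he10),
      mul_pos hε (mul_pos hc0 hc0)]
  have hc₂1 : 1 ≤ c + ε := by linarith
  obtain ⟨A, hAdef⟩ : ∃ x : ℝ, e1^2 * (c+ε) / (c-ε)^3 = x := ⟨_, rfl⟩
  have hA0 : 0 < A := by
    rw [← hAdef]; exact div_pos (by positivity) (pow_pos hc₁0 3)
  have hA1 : A < 1 := by
    rw [← hAdef, div_lt_one (pow_pos hc₁0 3)]; exact hAlt
  have hsumm : Summable (fun k : ℕ => (k:ℝ)^5 * A^k) :=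
    summable_pow_mul_geometric_of_norm_lt_one 5
      (by rw [Real.norm_eq_abs, abs_of_pos hA0]; exact hA1)
  have hC₁0 : 0 ≤ ∑' k : ℕ, (k:ℝ)^5 * A^k := tsum_nonneg fun k => by positivity
  refine ⟨(∑' k : ℕ, (k:ℝ)^5 * A^k) + 1, by linarith, ⌈2/ε⌉₊ + 3, ?_⟩
  intro n hn V U iV iU dV dU hV hU
  have hn3 : 3 ≤ n := by omega
  have hnn : (0:ℝ) < (n:ℝ) := by exact_mod_cast (by omega : 0 < n)
  have hεn : 2 ≤ ε*(n:ℝ) := by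
    have h1 : ((⌈2/ε⌉₊ : ℕ) : ℝ) ≤ (n:ℝ) := by exact_mod_cast (by omega : ⌈2/ε⌉₊ ≤ n)
    have h2 : 2/ε ≤ ((⌈2/ε⌉₊ : ℕ) : ℝ) := Nat.le_ceil _
    calc (2:ℝ) = (2/ε)*ε := by field_simp
      _ ≤ (n:ℝ)*ε := mul_le_mul_of_nonneg_right (h2.trans h1) hε.le
      _ = ε*(n:ℝ) := mul_comm _ _
  have hucn : c*(n:ℝ) ≤ ((Fintype.card U : ℕ):ℝ) := by
    rw [hU]; exact_mod_cast Nat.le_ceil _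
  have hu1 : ((Fintype.card U : ℕ):ℝ) ≤ (c+ε)*(n:ℝ) := by
    rw [hU]
    have h1 := Nat.ceil_lt_add_one (show (0:ℝ) ≤ c*(n:ℝ) by positivity)
    have h2 : (c+ε)*(n:ℝ) = c*(n:ℝ) + ε*(n:ℝ) := by ring
    linarith
  have hu2 : (c-ε)*(n:ℝ) ≤ ((Fintype.card U : ℕ):ℝ) - 2 := by
    have h2 : (c-ε)*(n:ℝ) = c*(n:ℝ) - ε*(n:ℝ) := by ring
    linarith
  have hmn : ((Fintype.card V : ℕ):ℝ) ≤ (n:ℝ) := by exact_mod_cast hV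
  have hnu : n ≤ Fintype.card U := by
    have h1 : (n:ℝ) ≤ ((Fintype.card U : ℕ):ℝ) := by nlinarith
    exact_mod_cast h1
  have hmu : Fintype.card V ≤ Fintype.card U := hV.trans hnu
  have hu3 : 3 ≤ Fintype.card U := hn3.trans hnu
  have hW0 : 0 < (Fintype.card U).choose 3 := Nat.choose_pos hu3
  -- Hall / covering
  have hsub : (univ.filter (fun f : V → {s : Finset U // s.card = 3} =>
        ¬ ∃ g : V → U, Function.Injective g ∧ ∀ v, g v ∈ (f v).1))
      ⊆ (Icc 4 (Fintype.card V)).biUnion (fun k =>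
          (powersetCard k (univ : Finset V)).biUnion (fun S =>
            (powersetCard (k-1) (univ : Finset U)).biUnion (fun T =>
              univ.filter (fun f : V → {s : Finset U // s.card = 3} =>
                ∀ v ∈ S, (f v).1 ⊆ T)))) := by
    intro f hf
    rw [mem_filter] at hf
    have hnotP := hf.2
    have hviol : ∃ S : Finset V, ((S.biUnion fun v => (f v).1).card < S.card) := by
      by_contra h
      push_neg at h
      exact hnotP ((Finset.all_card_le_biUnion_card_iff_exists_injective
        (fun v : V => (f v).1)).mp h)
    obtain ⟨S, hS⟩ := hviol
    have hSne : S.Nonempty := Finset.card_pos.mp (by omega)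
    obtain ⟨v0, hv0⟩ := hSne
    have hfv : (f v0).1 ⊆ S.biUnion (fun v => (f v).1) :=
      Finset.subset_biUnion_of_mem (fun v => (f v).1) hv0
    have h3T : 3 ≤ (S.biUnion fun v => (f v).1).card := by
      have h := Finset.card_le_card hfv
      rwa [(f v0).2] at h
    have h4k : 4 ≤ S.card := by omega
    have hkm : S.card ≤ Fintype.card V := Finset.card_le_univ S
    obtain ⟨T, hT₀T, -, hTcard⟩ := Finset.exists_subsuperset_card_eq
      (Finset.subset_univ (S.biUnion fun v => (f v).1))
      (by omega : (S.biUnion fun v => (f v).1).card ≤ S.card - 1)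
      (by rw [Finset.card_univ]; omega)
    refine Finset.mem_biUnion.mpr ⟨S.card, Finset.mem_Icc.mpr ⟨h4k, hkm⟩,
      Finset.mem_biUnion.mpr ⟨S, mem_powersetCard_univ.mpr rfl,
        Finset.mem_biUnion.mpr ⟨T, mem_powersetCard_univ.mpr hTcard, ?_⟩⟩⟩
    rw [mem_filter]
    exact ⟨mem_univ f, fun v hv =>
      (Finset.subset_biUnion_of_mem (fun v => (f v).1) hv).trans hT₀T⟩
  -- the union bound in ℕ
  have hcard : (univ.filter (fun f : V → {s : Finset U // s.card = 3} =>
        ¬ ∃ g : V → U, Function.Injective g ∧ ∀ v, g v ∈ (f v).1)).card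
      ≤ ∑ k ∈ Icc 4 (Fintype.card V),
          (Fintype.card V).choose k * ((Fintype.card U).choose (k-1)
            * (((k-1).choose 3)^k
              * ((Fintype.card U).choose 3)^(Fintype.card V - k))) := by
    refine (Finset.card_le_card hsub).trans (Finset.card_biUnion_le.trans
      (Finset.sum_le_sum fun k hk => Finset.card_biUnion_le.trans ?_))
    have hin : ∀ S ∈ powersetCard k (univ : Finset V),
        ((powersetCard (k-1) (univ : Finset U)).biUnion (fun T =>
          univ.filter (fun f : V → {s : Finset U // s.card = 3} =>
            ∀ v ∈ S, (f v).1 ⊆ T))).card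
        ≤ (Fintype.card U).choose (k-1) * (((k-1).choose 3)^k
            * ((Fintype.card U).choose 3)^(Fintype.card V - k)) := by
      intro S hS
      have hSc : S.card = k := mem_powersetCard_univ.mp hS
      refine Finset.card_biUnion_le.trans ?_
      have heq : ∀ T ∈ powersetCard (k-1) (univ : Finset U),
          (univ.filter (fun f : V → {s : Finset U // s.card = 3} =>
            ∀ v ∈ S, (f v).1 ⊆ T)).card
          = ((k-1).choose 3)^k * ((Fintype.card U).choose 3)^(Fintype.card V - k) := by
        intro T hT
        rw [aux_count S T, mem_powersetCard_univ.mp hT, hSc]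
      rw [Finset.sum_congr rfl heq, Finset.sum_const, Finset.card_powersetCard,
        Finset.card_univ, smul_eq_mul]
    refine (Finset.sum_le_sum hin).trans (le_of_eq ?_)
    rw [Finset.sum_const, Finset.card_powersetCard, Finset.card_univ, smul_eq_mul]
  -- cast to ℝ
  have hcardR : ((univ.filter (fun f : V → {s : Finset U // s.card = 3} =>
        ¬ ∃ g : V → U, Function.Injective g ∧ ∀ v, g v ∈ (f v).1)).card : ℝ)
      ≤ ∑ k ∈ Icc 4 (Fintype.card V),
          ((Fintype.card V).choose k : ℝ) * ((Fintype.card U).choose (k-1) : ℝ)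
            * (((k-1).choose 3 : ℕ) : ℝ)^k
            * (((Fintype.card U).choose 3 : ℕ) : ℝ)^(Fintype.card V - k) := by
    refine (Nat.cast_le.mpr hcard).trans (le_of_eq ?_)
    push_cast
    exact Finset.sum_congr rfl (fun k hk => by ring)
  have hterm : ∀ k ∈ Icc 4 (Fintype.card V),
      ((Fintype.card V).choose k : ℝ) * ((Fintype.card U).choose (k-1) : ℝ)
        * (((k-1).choose 3 : ℕ) : ℝ)^k
        * (((Fintype.card U).choose 3 : ℕ) : ℝ)^(Fintype.card V - k)
      ≤ ((k:ℝ)^5 * A^k) *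
          ((((Fintype.card U).choose 3 : ℕ) : ℝ)^(Fintype.card V) / (n:ℝ)^5) := by
    intro k hk
    rw [Finset.mem_Icc] at hk
    obtain ⟨l, hl⟩ := Nat.exists_eq_add_of_le hk.1
    rw [Nat.add_comm] at hl
    subst hl
    have h1 : l + 4 - 1 = l + 3 := rfl
    rw [h1]
    have ht := aux_term (c-ε) (c+ε) (n:ℝ) (Fintype.card V) (Fintype.card U) l
      hc₁0 hc₂1 hnn hmn hk.2 hu1 hu2
    rw [he1def, hAdef] at ht
    refine ht.trans (le_of_eq ?_)
    push_cast
    ring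
  have hsum2 : ∑ k ∈ Icc 4 (Fintype.card V), ((k:ℝ)^5 * A^k) ≤ ∑' k : ℕ, (k:ℝ)^5 * A^k :=
    Summable.sum_le_tsum _ (fun k _ => by positivity) hsumm
  have hfail : ((univ.filter (fun f : V → {s : Finset U // s.card = 3} =>
        ¬ ∃ g : V → U, Function.Injective g ∧ ∀ v, g v ∈ (f v).1)).card : ℝ)
      ≤ ((∑' k : ℕ, (k:ℝ)^5 * A^k) / (n:ℝ)^5)
          * (((Fintype.card U).choose 3 : ℕ) : ℝ)^(Fintype.card V) := by
    refine hcardR.trans ((Finset.sum_le_sum hterm).trans ?_)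
    rw [← Finset.sum_mul]
    have hmul := mul_le_mul_of_nonneg_right hsum2
      (by positivity : (0:ℝ) ≤ (((Fintype.card U).choose 3:ℕ):ℝ)^(Fintype.card V) / (n:ℝ)^5)
    refine hmul.trans (le_of_eq ?_)
    ring
  -- total count and conclusion
  have htotN : Fintype.card (V → {s : Finset U // s.card = 3})
      = ((Fintype.card U).choose 3)^(Fintype.card V) := by
    rw [Fintype.card_fun, Fintype.card_finset_len]
  have hsplitN : (univ.filter (fun f : V → {s : Finset U // s.card = 3} =>
        ∃ g : V → U, Function.Injective g ∧ ∀ v, g v ∈ (f v).1)).card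
      + (univ.filter (fun f : V → {s : Finset U // s.card = 3} =>
        ¬ ∃ g : V → U, Function.Injective g ∧ ∀ v, g v ∈ (f v).1)).card
      = ((Fintype.card U).choose 3)^(Fintype.card V) := by
    rw [← htotN, ← Finset.card_univ]
    exact Finset.card_filter_add_card_filter_not _
  have hNat : (Nat.card {f : V → {s : Finset U // s.card = 3} //
      ∃ g : V → U, Function.Injective g ∧ ∀ v, g v ∈ (f v).1} : ℕ)
      = (univ.filter (fun f : V → {s : Finset U // s.card = 3} =>
          ∃ g : V → U, Function.Injective g ∧ ∀ v, g v ∈ (f v).1)).card := by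
    rw [Nat.card_eq_fintype_card, Fintype.card_subtype]
  rw [hNat, htotN]
  have h5 : (0:ℝ) < (n:ℝ)^5 := by positivity
  have htR : (0:ℝ) < ((((Fintype.card U).choose 3)^(Fintype.card V) : ℕ) : ℝ) := by
    exact_mod_cast pow_pos hW0 (Fintype.card V)
  rw [le_div_iff₀ htR]
  have hcastpow : ((((Fintype.card U).choose 3)^(Fintype.card V) : ℕ) : ℝ)
      = (((Fintype.card U).choose 3 : ℕ):ℝ)^(Fintype.card V) := by push_cast; rfl
  have hNf : ((univ.filter (fun f : V → {s : Finset U // s.card = 3} =>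
        ∃ g : V → U, Function.Injective g ∧ ∀ v, g v ∈ (f v).1)).card : ℝ)
      = ((((Fintype.card U).choose 3)^(Fintype.card V) : ℕ) : ℝ)
        - ((univ.filter (fun f : V → {s : Finset U // s.card = 3} =>
            ¬ ∃ g : V → U, Function.Injective g ∧ ∀ v, g v ∈ (f v).1)).card : ℝ) := by
    have h := congrArg (fun x : ℕ => (x:ℝ)) hsplitN
    push_cast at h ⊢
    linarith
  rw [hNf]
  set T := ∑' k : ℕ, (k:ℝ)^5 * A^k with hTdef
  have hexpand : (1 - (T+1)/(n:ℝ)^5) * ((((Fintype.card U).choose 3)^(Fintype.card V) : ℕ) : ℝ)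
      = ((((Fintype.card U).choose 3)^(Fintype.card V) : ℕ) : ℝ)
        - ((T+1)/(n:ℝ)^5) * ((((Fintype.card U).choose 3)^(Fintype.card V) : ℕ) : ℝ) := by
    ring
  have h6 : (T/(n:ℝ)^5) * ((((Fintype.card U).choose 3)^(Fintype.card V) : ℕ) : ℝ)
      ≤ ((T+1)/(n:ℝ)^5) * ((((Fintype.card U).choose 3)^(Fintype.card V) : ℕ) : ℝ) := by
    gcongr
    linarith
  rw [← hcastpow] at hfail
  linarith
end

section
/- For every real ε > 0 there exists a threshold N such that for all integers n ≥ N and all integers k with 4 ≤ k ≤ n, setting c = (1 + ε)·e, the following inequality of real numbers holds: (n·e/k)^k · (c·n·e/(k−1))^{k−1} · ((k−1)(k−2)(k−3)/(c·n·(c·n−1)·(c·n−2)))^k ≤ ((1 + 0.5·ε)/(1 + ε))^{2k−1} · (k/n)^{k+1}. -/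
set_option maxHeartbeats 1600000

private lemma aux_id (m : ℕ) (Np e K L P u : ℝ) (hN : Np ≠ 0) (hK : K ≠ 0)
    (hL : L ≠ 0) (hP : P ≠ 0) (he : e ≠ 0) :
    (Np * e / K) ^ (m+4) * (P * e * Np * e / L) ^ (m+3) *
      (L^3 * u / (P * e * Np)^3) ^ (m+4)
      = (K / Np) ^ (m+5) * (L / (P * K)) ^ (2*m+9) * u ^ (m+4) / e^2 := by
  simp only [div_pow, mul_pow, pow_add, pow_mul]
  field_simp
  ring

/-- The inequality chain from the proof of the 3-out perfect-matching lemma: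
for `c = (1+ε)e` and `n` large enough, for all `4 ≤ k ≤ n`,
`(ne/k)^k (cne/(k-1))^{k-1} ((k-1)(k-2)(k-3)/(cn(cn-1)(cn-2)))^k
  ≤ ((1+0.5ε)/(1+ε))^{2k-1} (k/n)^{k+1}`. -/
theorem stmt_3 (ε : ℝ) (hε : 0 < ε) :
    ∃ N : ℕ, ∀ n : ℕ, N ≤ n → ∀ k : ℕ, 4 ≤ k → k ≤ n →
      (let e : ℝ := Real.exp 1
       let c : ℝ := (1 + ε) * e
       ((n : ℝ) * e / k) ^ k * (c * n * e / ((k : ℝ) - 1)) ^ (k - 1) *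
          (((k : ℝ) - 1) * ((k : ℝ) - 2) * ((k : ℝ) - 3) /
              (c * n * (c * n - 1) * (c * n - 2))) ^ k ≤
        ((1 + 0.5 * ε) / (1 + ε)) ^ (2 * k - 1) * ((k : ℝ) / n) ^ (k + 1)) := by
  refine ⟨4, ?_⟩
  intro n hn k hk4 hkn
  obtain ⟨m, rfl⟩ : ∃ m, k = m + 4 := ⟨k - 4, by omega⟩
  intro e c
  have he : e = Real.exp 1 := rfl
  have hc : c = (1 + ε) * e := rfl
  clear_value e c
  set P : ℝ := 1 + ε with hP
  set Q : ℝ := 1 + 0.5 * ε with hQ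
  have hP1 : (1:ℝ) < P := by rw [hP]; linarith
  have hQ1 : (1:ℝ) < Q := by rw [hQ]; nlinarith
  clear_value P Q
  have hP0 : (0:ℝ) < P := by linarith
  have hQ0 : (0:ℝ) < Q := by linarith
  have he2 : (2:ℝ) ≤ e := by
    have := Real.add_one_le_exp (1:ℝ); rw [he]; linarith
  have he0 : (0:ℝ) < e := by linarith
  have hc2 : (2:ℝ) ≤ c := by rw [hc]; nlinarith
  set K : ℝ := ((m + 4 : ℕ) : ℝ) with hK
  set N' : ℝ := (n : ℝ) with hN'
  have hKval : K = (m:ℝ) + 4 := by rw [hK]; push_cast; ring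
  have hK4 : (4:ℝ) ≤ K := by
    rw [hKval]; have : (0:ℝ) ≤ (m:ℝ) := Nat.cast_nonneg m; linarith
  have hKN : K ≤ N' := by rw [hK, hN']; exact_mod_cast hkn
  have hN4 : (4:ℝ) ≤ N' := le_trans hK4 hKN
  have hN0 : (0:ℝ) < N' := by linarith
  have hK0 : (0:ℝ) < K := by linarith
  have hK10 : (0:ℝ) < K - 1 := by linarith
  have hcn8 : (8:ℝ) ≤ c * N' := by nlinarith
  have hcn0 : (0:ℝ) < c * N' := by linarith
  have hcn1 : (0:ℝ) < c * N' - 1 := by linarith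
  have hcn2 : (0:ℝ) < c * N' - 2 := by linarith
  set u : ℝ := Real.exp (6 / (c * N')) with hu
  clear_value K N' u
  have hu1 : 1 + 6 / (c * N') ≤ u := by
    have := Real.add_one_le_exp (6 / (c * N')); rw [hu]; linarith
  have hu0 : (0:ℝ) < u := by rw [hu]; exact Real.exp_pos _
  have hK20 : (0:ℝ) < K - 2 := by linarith
  have hK30 : (0:ℝ) < K - 3 := by linarith
  have hnum0 : (0:ℝ) < (K - 1) * (K - 2) * (K - 3) :=
    mul_pos (mul_pos hK10 hK20) hK30
  have hden0 : (0:ℝ) < c * N' * (c * N' - 1) * (c * N' - 2) :=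
    mul_pos (mul_pos hcn0 hcn1) hcn2
  -- Step 1: bound Z by Z'
  have hZ0 : (0:ℝ) ≤ (K - 1) * (K - 2) * (K - 3) /
      (c * N' * (c * N' - 1) * (c * N' - 2)) :=
    div_nonneg hnum0.le hden0.le
  have hZle : (K - 1) * (K - 2) * (K - 3) /
      (c * N' * (c * N' - 1) * (c * N' - 2)) ≤ (K - 1)^3 * u / (c * N')^3 := by
    rw [div_le_div_iff₀ hden0 (by positivity)]
    have h6 : 6 / (c * N') * (c * N') = 6 := div_mul_cancel₀ _ (ne_of_gt hcn0)
    have hst2 : 6 / (c * N') * (c * N')^2 = 6 * (c * N') := by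
      field_simp
    have hs0 : (0:ℝ) < 6 / (c * N') := by positivity
    have hnum : (K - 1) * (K - 2) * (K - 3) ≤ (K - 1)^3 := by nlinarith
    have hden : (c * N')^2 ≤ u * ((c * N' - 1) * (c * N' - 2)) := by
      have h1 : (1 + 6 / (c * N')) * ((c * N' - 1) * (c * N' - 2)) ≤
          u * ((c * N' - 1) * (c * N' - 2)) :=
        mul_le_mul_of_nonneg_right hu1 (mul_pos hcn1 hcn2).le
      nlinarith [h1, h6, hst2, hs0, hcn8]
    have h3 : (c * N')^3 ≤ u * (c * N' * (c * N' - 1) * (c * N' - 2)) := by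
      nlinarith [mul_le_mul_of_nonneg_right hden hcn0.le]
    calc (K - 1) * (K - 2) * (K - 3) * (c * N')^3
        ≤ (K - 1)^3 * (u * (c * N' * (c * N' - 1) * (c * N' - 2))) :=
          mul_le_mul hnum h3 (by positivity) (by positivity)
      _ = (K - 1)^3 * u * (c * N' * (c * N' - 1) * (c * N' - 2)) := by ring
  have hexp1 : m + 4 - 1 = m + 3 := rfl
  have hexp2 : 2 * (m + 4) - 1 = 2 * m + 7 := by omega
  rw [hexp1, hexp2, show m+4+1 = m+5 by omega]
  -- Step 2: replace Z by Z'
  have step1 : (N' * e / K) ^ (m+4) * (c * N' * e / (K - 1)) ^ (m+3) *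
      ((K - 1) * (K - 2) * (K - 3) / (c * N' * (c * N' - 1) * (c * N' - 2))) ^ (m+4)
      ≤ (N' * e / K) ^ (m+4) * (c * N' * e / (K - 1)) ^ (m+3) *
        ((K - 1)^3 * u / (c * N')^3) ^ (m+4) := by
    apply mul_le_mul_of_nonneg_left (pow_le_pow_left₀ hZ0 hZle _) (by positivity)
  -- Step 3: the algebraic identity
  have step2 : (N' * e / K) ^ (m+4) * (c * N' * e / (K - 1)) ^ (m+3) *
      ((K - 1)^3 * u / (c * N')^3) ^ (m+4)
      = (K / N') ^ (m+5) * ((K - 1) / (P * K)) ^ (2*m+9) * u ^ (m+4) / e^2 := by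
    rw [hc]
    exact aux_id m N' e K (K - 1) P u (ne_of_gt hN0) (ne_of_gt hK0)
      (ne_of_gt hK10) (ne_of_gt hP0) (ne_of_gt he0)
  -- Step 4: the key scalar bound
  have hA : ((K - 1) / K) ^ (2*m+9) ≤ Real.exp (-2) := by
    have h1k : (K - 1) / K ≤ Real.exp (-(1/K)) := by
      have h := Real.add_one_le_exp (-(1/K))
      have h2 : (K - 1) / K = -(1/K) + 1 := by field_simp; ring
      rw [h2]; exact h
    calc ((K - 1) / K) ^ (2*m+9) ≤ (Real.exp (-(1/K))) ^ (2*m+9) := by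
          apply pow_le_pow_left₀ (by positivity) h1k
      _ = Real.exp (((2*m+9 : ℕ) : ℝ) * (-(1/K))) := by
          rw [Real.exp_nat_mul]
      _ ≤ Real.exp (-2) := by
          apply Real.exp_le_exp.mpr
          have hcast : ((2*m+9 : ℕ) : ℝ) = 2*(m:ℝ)+9 := by push_cast; ring
          rw [hcast, hKval]
          have h3 : (2*(m:ℝ)+9) * (-(1/((m:ℝ)+4))) = -((2*(m:ℝ)+9) / ((m:ℝ)+4)) := by
            ring
          rw [h3, neg_le_neg_iff, le_div_iff₀ (by positivity)]
          have : (0:ℝ) ≤ (m:ℝ) := Nat.cast_nonneg m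
          linarith
  have hB : u ^ (m+4) ≤ Real.exp 3 := by
    rw [hu, ← Real.exp_nat_mul]
    apply Real.exp_le_exp.mpr
    have hcast : ((m+4 : ℕ) : ℝ) = K := by rw [hK]
    rw [hcast, mul_div_assoc', div_le_iff₀ hcn0]
    nlinarith
  have hD : (1:ℝ) ≤ Q ^ (2*m+7) * P^2 := by
    have h1 : (1:ℝ) ≤ Q ^ (2*m+7) := one_le_pow₀ hQ1.le
    nlinarith
  have key : ((K - 1) / K) ^ (2*m+9) * u ^ (m+4) / e^2 ≤ Q ^ (2*m+7) * P^2 := by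
    calc ((K - 1) / K) ^ (2*m+9) * u ^ (m+4) / e^2
        ≤ Real.exp (-2) * Real.exp 3 / e^2 := by
          apply div_le_div_of_nonneg_right ?_ (by positivity)
          exact mul_le_mul hA hB (by positivity) (Real.exp_pos _).le
      _ ≤ 1 := by
          rw [← Real.exp_add, he]
          norm_num
          rw [div_le_one (by positivity)]
          exact Real.exp_le_exp.mpr (by norm_num)
      _ ≤ _ := hD
  -- Step 5: assemble
  have step3 : ((K - 1) / (P * K)) ^ (2*m+9) * u ^ (m+4) / e^2 ≤
      (Q / P) ^ (2*m+7) := by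
    have h1 : (K - 1) / (P * K) = ((K - 1) / K) / P := by
      rw [div_div, mul_comm]
    calc ((K - 1) / (P * K)) ^ (2*m+9) * u ^ (m+4) / e^2
        = (((K - 1) / K) ^ (2*m+9) * u ^ (m+4) / e^2) / P^(2*m+9) := by
          rw [h1, div_pow]; ring
      _ ≤ (Q ^ (2*m+7) * P^2) / P^(2*m+9) := by
          apply div_le_div_of_nonneg_right key (by positivity)
      _ = (Q / P) ^ (2*m+7) := by
          rw [div_pow, show P^(2*m+9) = P^(2*m+7) * P^2 by ring,
            mul_div_mul_right _ _ (by positivity)]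
  calc (N' * e / K) ^ (m+4) * (c * N' * e / (K - 1)) ^ (m+3) *
        ((K - 1) * (K - 2) * (K - 3) / (c * N' * (c * N' - 1) * (c * N' - 2))) ^ (m+4)
      ≤ (N' * e / K) ^ (m+4) * (c * N' * e / (K - 1)) ^ (m+3) *
        ((K - 1)^3 * u / (c * N')^3) ^ (m+4) := step1
    _ = (K / N') ^ (m+5) * ((K - 1) / (P * K)) ^ (2*m+9) * u ^ (m+4) / e^2 := step2
    _ = (((K - 1) / (P * K)) ^ (2*m+9) * u ^ (m+4) / e^2) * (K / N') ^ (m+5) := by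
        ring
    _ ≤ (Q / P) ^ (2*m+7) * (K / N') ^ (m+5) := by
        apply mul_le_mul_of_nonneg_right step3 (by positivity)
end

section
/- For every real number q with 0 < q < 1, there exist a constant C > 0 and a threshold N such that for every integer n ≥ N, the sum over integers k from 4 to n of q^{2k−1}·(k/n)^{k+1} is at most C/n^5. -/
/-- Summing the per-size failure bounds `q^{2k-1} (k/n)^{k+1}` over `4 ≤ k ≤ n`
gives `O(1/n^5)`. -/
theorem stmt_13 (q : ℝ) (hq0 : 0 < q) (hq1 : q < 1) :
    ∃ C : ℝ, 0 < C ∧ ∃ N : ℕ, ∀ n : ℕ, N ≤ n →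
      ∑ k ∈ Finset.Icc 4 n, q ^ (2 * k - 1) * ((k : ℝ) / n) ^ (k + 1) ≤
        C / (n : ℝ) ^ 5 := by
  have hr1 : ‖q ^ 2‖ < 1 := by
    rw [Real.norm_eq_abs, abs_of_nonneg (sq_nonneg q)]
    nlinarith
  have hsum : Summable (fun k : ℕ => (k : ℝ) ^ 5 * (q ^ 2) ^ k) :=
    summable_pow_mul_geometric_of_norm_lt_one 5 hr1
  set S : ℝ := ∑' k : ℕ, (k : ℝ) ^ 5 * (q ^ 2) ^ k with hS
  have hS0 : 0 ≤ S := tsum_nonneg fun k => by positivity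
  refine ⟨S / q + 1, by positivity, 1, fun n hn => ?_⟩
  have hn0 : (0 : ℝ) < (n : ℝ) := by exact_mod_cast hn
  have step1 : ∑ k ∈ Finset.Icc 4 n, q ^ (2 * k - 1) * ((k : ℝ) / n) ^ (k + 1) ≤
      ∑ k ∈ Finset.Icc 4 n, ((k : ℝ) ^ 5 * (q ^ 2) ^ k) / (q * (n : ℝ) ^ 5) := by
    apply Finset.sum_le_sum
    intro k hk
    obtain ⟨hk4, hkn⟩ := Finset.mem_Icc.mp hk
    have hkn' : (k : ℝ) / n ≤ 1 := by
      rw [div_le_one hn0]; exact_mod_cast hkn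
    have hkpos : (0:ℝ) ≤ (k : ℝ) / n := by positivity
    have h1 : ((k : ℝ) / n) ^ (k + 1) ≤ ((k : ℝ) / n) ^ 5 :=
      pow_le_pow_of_le_one hkpos hkn' (by omega)
    have h2 : q ^ (2 * k - 1) = (q ^ 2) ^ k / q := by
      rw [← pow_mul]
      rw [eq_div_iff (ne_of_gt hq0), ← pow_succ]
      congr 1
      omega
    rw [h2]
    have hq5 : (0:ℝ) < q ^ (2 * k) / q := by positivity
    calc (q ^ 2) ^ k / q * ((k : ℝ) / n) ^ (k + 1)
        ≤ (q ^ 2) ^ k / q * ((k : ℝ) / n) ^ 5 := by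
          apply mul_le_mul_of_nonneg_left h1
          positivity
      _ = ((k : ℝ) ^ 5 * (q ^ 2) ^ k) / (q * (n : ℝ) ^ 5) := by
          field_simp
  have step2 : ∑ k ∈ Finset.Icc 4 n, ((k : ℝ) ^ 5 * (q ^ 2) ^ k) / (q * (n : ℝ) ^ 5) ≤
      S / (q * (n : ℝ) ^ 5) := by
    rw [← Finset.sum_div]
    apply div_le_div_of_nonneg_right _ (by positivity)
    exact Summable.sum_le_tsum _ (fun k _ => by positivity) hsum
  calc _ ≤ S / (q * (n : ℝ) ^ 5) := le_trans step1 step2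
    _ = (S / q) / (n : ℝ) ^ 5 := by rw [div_div]
    _ ≤ (S / q + 1) / (n : ℝ) ^ 5 := by
        apply div_le_div_of_nonneg_right _ (by positivity)
        linarith
end
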